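/- Let i_max < j_max be positive integers, let a_{ij} ≥ 0 and b_{ij} > 0 for all i ∈ {1,…,i_max}, j ∈ {1,…,j_max}. Define f(w) = min_{1≤i≤i_max} (Σ_{j=1}^{j_max} w_j a_{ij})/(Σ_{j=1}^{j_max} w_j b_{ij}) for w in the probability simplex Δ_{j_max}. Then there exists w* ∈ Δ_{j_max} attaining the maximum of f over Δ_{j_max} such that at most i_max of the coordinates w*_j are nonzero. -/

import Mathlib

open Finset

/-- Hitting-time lemma: moving from `w ≥ 0` along a direction `D` that has a negative
coordinate, we can reach the boundary while staying nonnegative. -/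
lemma hitlem {n : ℕ} (w D : Fin n → ℝ) (hw : ∀ j, 0 ≤ w j) (hne : ∃ j, D j < 0) :
    ∃ t : ℝ, 0 ≤ t ∧ (∀ j, 0 ≤ w j + t * D j) ∧ ∃ j₀, D j₀ < 0 ∧ w j₀ + t * D j₀ = 0 := by
  classical
  set J : Finset (Fin n) := Finset.univ.filter (fun j => D j < 0) with hJdef
  have hJ : J.Nonempty := by
    obtain ⟨j, hj⟩ := hne
    exact ⟨j, by simp [hJdef, hj]⟩
  set t : ℝ := J.inf' hJ (fun j => w j / (-D j)) with htdef
  have hmemJ : ∀ j, j ∈ J ↔ D j < 0 := by intro j; simp [hJdef]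
  have ht0 : 0 ≤ t := by
    apply Finset.le_inf'
    intro j hj
    have hDj : D j < 0 := (hmemJ j).1 hj
    exact div_nonneg (hw j) (by linarith)
  refine ⟨t, ht0, ?_, ?_⟩
  · intro j
    rcases le_or_gt 0 (D j) with h | h
    · exact add_nonneg (hw j) (mul_nonneg ht0 h)
    · have hle : t ≤ w j / (-D j) := Finset.inf'_le _ ((hmemJ j).2 h)
      have hpos : (0:ℝ) < -D j := by linarith
      have := (le_div_iff₀ hpos).1 hle
      nlinarith
  · obtain ⟨j₀, hj₀J, hj₀eq⟩ := Finset.exists_mem_eq_inf' hJ (fun j => w j / (-D j))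
    have hDj₀ : D j₀ < 0 := (hmemJ j₀).1 hj₀J
    refine ⟨j₀, hDj₀, ?_⟩
    rw [show t = w j₀ / -D j₀ from hj₀eq]
    have hne' : -D j₀ ≠ 0 := by linarith
    field_simp
    rw [div_self (by linarith : D j₀ ≠ 0)]; ring

/-- Linear combination expansion used repeatedly. -/
lemma sum_comb {n : ℕ} (u v : Fin n → ℝ) (t : ℝ) (g : Fin n → ℝ) :
    ∑ j, (u j + t * v j) * g j = (∑ j, u j * g j) + t * ∑ j, v j * g j := by
  rw [Finset.mul_sum, ← Finset.sum_add_distrib]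
  exact Finset.sum_congr rfl (fun j _ => by ring)

lemma sum_expand {n : ℕ} (v : Fin n → ℝ) (lam : ℝ) (p q : Fin n → ℝ) :
    ∑ j, v j * (p j - lam * q j) = (∑ j, v j * p j) - lam * ∑ j, v j * q j := by
  rw [Finset.mul_sum, ← Finset.sum_sub_distrib]
  exact Finset.sum_congr rfl (fun j _ => by ring)

/-- Descent step: if a nonnegative vector satisfies `imax` homogeneous linear
inequalities and has support of size `> imax`, there is a nonzero nonnegative
vector with strictly smaller support also satisfying them. -/
lemma descent {imax jmax : ℕ} (h0 : 0 < imax) (c : Fin imax → Fin jmax → ℝ)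
    (w : Fin jmax → ℝ) (hw : ∀ j, 0 ≤ w j)
    (hL : ∀ i, 0 ≤ ∑ j, w j * c i j)
    (hcard : imax < (Finset.univ.filter fun j => w j ≠ 0).card) :
    ∃ w' : Fin jmax → ℝ, (∀ j, 0 ≤ w' j) ∧ (∀ i, 0 ≤ ∑ j, w' j * c i j) ∧ w' ≠ 0 ∧
      (Finset.univ.filter fun j => w' j ≠ 0).card <
        (Finset.univ.filter fun j => w j ≠ 0).card := by
  classical
  set S : Finset (Fin jmax) := Finset.univ.filter (fun j => w j ≠ 0) with hSdef
  have hSmem : ∀ j, j ∈ S ↔ w j ≠ 0 := by intro j; simp [hSdef]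
  have hSne : S.Nonempty := Finset.card_pos.mp (lt_of_le_of_lt (Nat.zero_le _) hcard)
  -- the linear functionals on functions supported on S
  let ℓ : Fin imax → ((↥S → ℝ) →ₗ[ℝ] ℝ) := fun i => ∑ j : ↥S, c i j • LinearMap.proj j
  have hℓ : ∀ i (d : ↥S → ℝ), ℓ i d = ∑ j : ↥S, c i j * d j := by
    intro i d
    simp [ℓ, LinearMap.sum_apply, LinearMap.smul_apply, LinearMap.proj_apply, smul_eq_mul]
  -- extension by zero
  let ext : (↥S → ℝ) → (Fin jmax → ℝ) := fun d j => if h : j ∈ S then d ⟨j, h⟩ else 0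
  have hext_mem : ∀ (d : ↥S → ℝ) (j : ↥S), ext d ↑j = d j := by
    intro d j; simp [ext]
  have hext_zero : ∀ (d : ↥S → ℝ) (j : Fin jmax), j ∉ S → ext d j = 0 := by
    intro d j hj; simp [ext, hj]
  have hext_sum : ∀ (d : ↥S → ℝ) (i : Fin imax), ∑ j, ext d j * c i j = ℓ i d := by
    intro d i
    rw [hℓ]
    have h1 : ∑ j ∈ S, ext d j * c i j = ∑ j, ext d j * c i j :=
      Finset.sum_subset S.subset_univ (fun j _ hj => by rw [hext_zero d j hj, zero_mul])
    rw [← h1, ← Finset.sum_coe_sort S (fun j => ext d j * c i j)]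
    exact Finset.sum_congr rfl (fun j _ => by rw [hext_mem]; ring)
  set wt : ↥S → ℝ := fun j => w ↑j with hwtdef
  have hwt_sum : ∀ i, ∑ j, w j * c i j = ℓ i wt := by
    intro i
    rw [hℓ]
    have h1 : ∑ j ∈ S, w j * c i j = ∑ j, w j * c i j :=
      Finset.sum_subset S.subset_univ (fun j _ hj => by
        have : w j = 0 := by_contra (fun h => hj ((hSmem j).2 h))
        rw [this, zero_mul])
    rw [← h1, ← Finset.sum_coe_sort S (fun j => w j * c i j)]
    exact Finset.sum_congr rfl (fun j _ => by ring)
  have hwt_ne : wt ≠ 0 := by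
    obtain ⟨j, hj⟩ := hSne
    intro h
    exact (hSmem j).1 hj (congrFun h ⟨j, hj⟩)
  have hdimV : Module.finrank ℝ (↥S → ℝ) = S.card := by
    rw [Module.finrank_pi, Fintype.card_coe]
  set M : (↥S → ℝ) →ₗ[ℝ] (Fin imax → ℝ) := LinearMap.pi ℓ with hMdef
  have hMker : S.card ≤ Module.finrank ℝ (LinearMap.ker M) + imax := by
    have h1 := LinearMap.finrank_range_add_finrank_ker M
    have h2 : Module.finrank ℝ (LinearMap.range M) ≤ imax := by
      refine le_trans (Submodule.finrank_le _) ?_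
      rw [Module.finrank_pi, Fintype.card_fin]
    rw [hdimV] at h1
    omega
  by_cases hA : ∀ d ∈ LinearMap.ker M, d ∈ Submodule.span ℝ {wt}
  · -- Case B : kernel ⊆ span wt, so all constraints are tight at w
    have hker_ne : LinearMap.ker M ≠ ⊥ := by
      intro h
      rw [h, finrank_bot] at hMker
      omega
    obtain ⟨v, hvker, hvne⟩ := (Submodule.ne_bot_iff _).1 hker_ne
    obtain ⟨r, hr⟩ := Submodule.mem_span_singleton.1 (hA v hvker)
    have hrne : r ≠ 0 := by
      rintro rfl; rw [zero_smul] at hr; exact hvne hr.symm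
    have hwker : wt ∈ LinearMap.ker M := by
      have : wt = r⁻¹ • v := by rw [← hr, smul_smul, inv_mul_cancel₀ hrne, one_smul]
      rw [this]; exact Submodule.smul_mem _ _ hvker
    have hw0 : ∀ i, ℓ i wt = 0 := fun i => congrFun (LinearMap.mem_ker.1 hwker) i
    set i₀ : Fin imax := ⟨0, h0⟩ with hi₀def
    set M' : (↥S → ℝ) →ₗ[ℝ] ({i : Fin imax // i ≠ i₀} → ℝ) :=
      LinearMap.pi (fun i => ℓ i.1) with hM'def
    have hcard' : Fintype.card {i : Fin imax // i ≠ i₀} = imax - 1 := by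
      have h1 := Fintype.card_subtype_compl (fun i : Fin imax => i = i₀)
      simp only [Fintype.card_subtype_eq, Fintype.card_fin] at h1
      exact h1
    have hM'ker : S.card ≤ Module.finrank ℝ (LinearMap.ker M') + (imax - 1) := by
      have h1 := LinearMap.finrank_range_add_finrank_ker M'
      have h2 : Module.finrank ℝ (LinearMap.range M') ≤ imax - 1 := by
        refine le_trans (Submodule.finrank_le _) ?_
        rw [Module.finrank_pi, hcard']
      rw [hdimV] at h1
      omega
    have hnotle : ¬ (LinearMap.ker M' ≤ Submodule.span ℝ {wt}) := by
      intro hle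
      have h1 := Submodule.finrank_mono hle
      rw [finrank_span_singleton hwt_ne] at h1
      omega
    obtain ⟨d₁, hd₁ker, hd₁span⟩ := SetLike.not_le_iff_exists.1 hnotle
    have hd₁0 : ∀ i : Fin imax, i ≠ i₀ → ℓ i d₁ = 0 := by
      intro i hi
      exact congrFun (LinearMap.mem_ker.1 hd₁ker) ⟨i, hi⟩
    have hd₁i₀ : ℓ i₀ d₁ ≠ 0 := by
      intro h
      apply hd₁span
      apply hA
      rw [LinearMap.mem_ker]
      ext i
      by_cases hi : i = i₀
      · subst hi; exact h
      · exact hd₁0 i hi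
    obtain ⟨d, hd0, hdspan, hdi₀⟩ :
        ∃ d : ↥S → ℝ, (∀ i : Fin imax, i ≠ i₀ → ℓ i d = 0) ∧
          d ∉ Submodule.span ℝ {wt} ∧ 0 < ℓ i₀ d := by
      rcases hd₁i₀.lt_or_gt with h | h
      · refine ⟨-d₁, fun i hi => by rw [map_neg, hd₁0 i hi, neg_zero], ?_, by
          rw [map_neg]; exact neg_pos.2 h⟩
        intro hmem
        exact hd₁span (by simpa using Submodule.neg_mem _ hmem)
      · exact ⟨d₁, hd₁0, hd₁span, h⟩
    set D := ext d with hDdef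
    have hDsum : ∀ i, ∑ j, D j * c i j = ℓ i d := fun i => hext_sum d i
    have hDsupp : ∀ j, D j ≠ 0 → w j ≠ 0 := by
      intro j hD
      by_contra h
      exact hD (hext_zero d j (fun hj => ((hSmem j).1 hj) h))
    have hld : ∀ i, 0 ≤ ℓ i d := by
      intro i
      by_cases hi : i = i₀
      · subst hi; exact hdi₀.le
      · rw [hd0 i hi]
    by_cases hneg : ∃ j, D j < 0
    · obtain ⟨t, ht0, htnn, j₀, hj₀D, hj₀z⟩ := hitlem w D hw hneg
      have htpos : 0 < t := by
        rcases ht0.lt_or_eq with h | h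
        · exact h
        · exfalso
          rw [← h, zero_mul, add_zero] at hj₀z
          exact hDsupp j₀ (ne_of_lt hj₀D) hj₀z
      have hLsum : ∀ i, ∑ j, (w j + t * D j) * c i j = t * ℓ i d := by
        intro i
        rw [sum_comb, hDsum, hwt_sum, hw0, zero_add]
      have hposL : 0 < ∑ j, (w j + t * D j) * c i₀ j := by
        rw [hLsum]; exact mul_pos htpos hdi₀
      refine ⟨fun j => w j + t * D j, htnn, ?_, ?_, ?_⟩
      · intro i; rw [hLsum]; exact mul_nonneg ht0 (hld i)
      · intro heq
        have : ∑ j, (w j + t * D j) * c i₀ j = 0 :=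
          Finset.sum_eq_zero (fun j _ => by rw [congrFun heq j]; simp)
        exact absurd this (ne_of_gt hposL)
      · apply Finset.card_lt_card
        rw [Finset.ssubset_iff_of_subset ?_]
        · refine ⟨j₀, (hSmem j₀).2 (hDsupp j₀ (ne_of_lt hj₀D)), ?_⟩
          simp only [Finset.mem_filter, Finset.mem_univ, true_and, not_not]
          exact hj₀z
        · intro j hj
          simp only [Finset.mem_filter, Finset.mem_univ, true_and] at hj
          apply (hSmem j).2
          intro hwj
          apply hj
          have hDj : D j = 0 := by
            by_contra h
            exact hDsupp j h hwj
          rw [hwj, hDj]; ring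
    · push_neg at hneg
      obtain ⟨js, hjs⟩ := hSne
      have hwjs : 0 < w js := lt_of_le_of_ne (hw js) (Ne.symm ((hSmem js).1 hjs))
      obtain ⟨t, ht0, htnn, j₀, hj₀D, hj₀z⟩ :=
        hitlem D (fun j => -w j) hneg ⟨js, by simpa using hwjs⟩
      have hwj₀ : w j₀ ≠ 0 := by
        simp only [neg_lt_zero] at hj₀D
        exact ne_of_gt hj₀D
      have hLsum : ∀ i, ∑ j, (D j + t * (-w j)) * c i j = ℓ i d - t * ℓ i wt := by
        intro i
        have := sum_comb D (fun j => -w j) t (fun j => c i j)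
        rw [this, hDsum]
        have : ∑ j, -w j * c i j = -∑ j, w j * c i j := by
          rw [← Finset.sum_neg_distrib]
          exact Finset.sum_congr rfl (fun j _ => by ring)
        rw [this, hwt_sum]
        ring
      have hposL : 0 < ∑ j, (D j + t * (-w j)) * c i₀ j := by
        rw [hLsum, hw0]; ring_nf; exact hdi₀
      refine ⟨fun j => D j + t * (-w j), htnn, ?_, ?_, ?_⟩
      · intro i; rw [hLsum, hw0]; ring_nf; exact hld i
      · intro heq
        have : ∑ j, (D j + t * (-w j)) * c i₀ j = 0 :=
          Finset.sum_eq_zero (fun j _ => by rw [congrFun heq j]; simp)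
        exact absurd this (ne_of_gt hposL)
      · apply Finset.card_lt_card
        rw [Finset.ssubset_iff_of_subset ?_]
        · refine ⟨j₀, (hSmem j₀).2 hwj₀, ?_⟩
          simp only [Finset.mem_filter, Finset.mem_univ, true_and, not_not]
          exact hj₀z
        · intro j hj
          simp only [Finset.mem_filter, Finset.mem_univ, true_and] at hj
          apply (hSmem j).2
          intro hwj
          apply hj
          have hDj : D j = 0 := by
            by_contra h
            exact hDsupp j h hwj
          rw [hwj, hDj]; ring
  · -- Case A : there is a kernel direction independent of wt
    push_neg at hA
    obtain ⟨d₁, hd₁ker, hd₁span⟩ := hA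
    have hd₁0 : ∀ i, ℓ i d₁ = 0 := fun i => congrFun (LinearMap.mem_ker.1 hd₁ker) i
    have hext_neg : ∀ (d : ↥S → ℝ) (j : Fin jmax), ext (-d) j = -ext d j := by
      intro d j
      by_cases hj : j ∈ S
      · simp [ext, hj]
      · simp [ext, hj]
    obtain ⟨d, hd0, hdspan, hneg⟩ :
        ∃ d : ↥S → ℝ, (∀ i, ℓ i d = 0) ∧ d ∉ Submodule.span ℝ {wt} ∧ ∃ j, ext d j < 0 := by
      by_cases h : ∃ j, ext d₁ j < 0
      · exact ⟨d₁, hd₁0, hd₁span, h⟩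
      · push_neg at h
        have hd₁ne : d₁ ≠ 0 := fun hz => hd₁span (hz ▸ Submodule.zero_mem _)
        obtain ⟨jp, hjp⟩ := Function.ne_iff.1 hd₁ne
        have hextpos : 0 < ext d₁ ↑jp := by
          have h1 := h ↑jp
          rw [hext_mem d₁ jp] at h1 ⊢
          exact lt_of_le_of_ne h1 (by simpa using (Ne.symm hjp))
        refine ⟨-d₁, fun i => by rw [map_neg, hd₁0 i, neg_zero], ?_, ⟨↑jp, ?_⟩⟩
        · intro hmem
          exact hd₁span (by simpa using Submodule.neg_mem _ hmem)
        · rw [hext_neg]; linarith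
    set D := ext d with hDdef
    have hDsum : ∀ i, ∑ j, D j * c i j = ℓ i d := fun i => hext_sum d i
    have hDsupp : ∀ j, D j ≠ 0 → w j ≠ 0 := by
      intro j hD
      by_contra h
      exact hD (hext_zero d j (fun hj => ((hSmem j).1 hj) h))
    obtain ⟨t, ht0, htnn, j₀, hj₀D, hj₀z⟩ := hitlem w D hw hneg
    have htpos : 0 < t := by
      rcases ht0.lt_or_eq with h | h
      · exact h
      · exfalso
        rw [← h, zero_mul, add_zero] at hj₀z
        exact hDsupp j₀ (ne_of_lt hj₀D) hj₀z
    have hLsum : ∀ i, ∑ j, (w j + t * D j) * c i j = ∑ j, w j * c i j := by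
      intro i
      rw [sum_comb, hDsum, hd0 i, mul_zero, add_zero]
    refine ⟨fun j => w j + t * D j, htnn, ?_, ?_, ?_⟩
    · intro i; rw [hLsum]; exact hL i
    · intro heq
      apply hdspan
      rw [Submodule.mem_span_singleton]
      refine ⟨-t⁻¹, ?_⟩
      ext j
      have h1 : w ↑j + t * D ↑j = 0 := congrFun heq ↑j
      have h2 : D ↑j = d j := hext_mem d j
      rw [h2] at h1
      have : d j = -t⁻¹ * w ↑j := by
        field_simp
        linarith
      simp only [Pi.smul_apply, smul_eq_mul, hwtdef]
      rw [this]
    · apply Finset.card_lt_card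
      rw [Finset.ssubset_iff_of_subset ?_]
      · refine ⟨j₀, (hSmem j₀).2 (hDsupp j₀ (ne_of_lt hj₀D)), ?_⟩
        simp only [Finset.mem_filter, Finset.mem_univ, true_and, not_not]
        exact hj₀z
      · intro j hj
        simp only [Finset.mem_filter, Finset.mem_univ, true_and] at hj
        apply (hSmem j).2
        intro hwj
        apply hj
        have hDj : D j = 0 := by
          by_contra h
          exact hDsupp j h hwj
        rw [hwj, hDj]; ring

/-- Iterated descent. -/
lemma shrink {imax jmax : ℕ} (h0 : 0 < imax) (c : Fin imax → Fin jmax → ℝ) :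
    ∀ n (w : Fin jmax → ℝ), (Finset.univ.filter fun j => w j ≠ 0).card ≤ n →
      (∀ j, 0 ≤ w j) → (∀ i, 0 ≤ ∑ j, w j * c i j) → w ≠ 0 →
      ∃ w' : Fin jmax → ℝ, (∀ j, 0 ≤ w' j) ∧ (∀ i, 0 ≤ ∑ j, w' j * c i j) ∧ w' ≠ 0 ∧
        (Finset.univ.filter fun j => w' j ≠ 0).card ≤ imax := by
  intro n
  induction n with
  | zero =>
    intro w hcard hw hL hne
    exact ⟨w, hw, hL, hne, le_trans hcard (Nat.zero_le _)⟩
  | succ n ih =>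
    intro w hcard hw hL hne
    by_cases h : (Finset.univ.filter fun j => w j ≠ 0).card ≤ imax
    · exact ⟨w, hw, hL, hne, h⟩
    · obtain ⟨w', hw', hL', hne', hlt⟩ := descent h0 c w hw hL (not_le.1 h)
      exact ih w' (by omega) hw' hL' hne'

theorem stmt1 (imax jmax : ℕ) (h0 : 0 < imax) (hij : imax < jmax)
    (a b : Fin imax → Fin jmax → ℝ)
    (ha : ∀ i j, 0 ≤ a i j) (hb : ∀ i j, 0 < b i j) :
    ∃ w : Fin jmax → ℝ, (∀ j, 0 ≤ w j) ∧ (∑ j, w j = 1) ∧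
      (Finset.univ.filter fun j => w j ≠ 0).card ≤ imax ∧
      ∀ v : Fin jmax → ℝ, (∀ j, 0 ≤ v j) → (∑ j, v j = 1) →
        (⨅ i : Fin imax, (∑ j, v j * a i j) / (∑ j, v j * b i j)) ≤
          ⨅ i : Fin imax, (∑ j, w j * a i j) / (∑ j, w j * b i j) := by
  classical
  have hjpos : 0 < jmax := lt_trans h0 hij
  haveI : Nonempty (Fin imax) := ⟨⟨0, h0⟩⟩
  haveI : Nonempty (Fin jmax) := ⟨⟨0, hjpos⟩⟩
  -- denominators are positive on the simplex
  have hden : ∀ (v : Fin jmax → ℝ), (∀ j, 0 ≤ v j) → (∑ j, v j = 1) →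
      ∀ i, 0 < ∑ j, v j * b i j := by
    intro v hv1 hv2 i
    have hex : ∃ j, 0 < v j := by
      by_contra h
      push_neg at h
      have : ∑ j, v j = 0 :=
        Finset.sum_eq_zero (fun j _ => le_antisymm (h j) (hv1 j))
      rw [hv2] at this; norm_num at this
    obtain ⟨j, hj⟩ := hex
    exact Finset.sum_pos' (fun j _ => mul_nonneg (hv1 j) (hb i j).le)
      ⟨j, Finset.mem_univ j, mul_pos hj (hb i j)⟩
  set Δ : Set (Fin jmax → ℝ) := stdSimplex ℝ (Fin jmax) with hΔdef
  have hΔmem : ∀ v : Fin jmax → ℝ, v ∈ Δ ↔ (∀ j, 0 ≤ v j) ∧ ∑ j, v j = 1 := fun v => Iff.rfl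
  set F : (Fin jmax → ℝ) → ℝ :=
    fun v => ⨅ i : Fin imax, (∑ j, v j * a i j) / (∑ j, v j * b i j) with hFdef
  have hFinf' : ∀ v, F v = Finset.univ.inf' Finset.univ_nonempty
      (fun i : Fin imax => (∑ j, v j * a i j) / (∑ j, v j * b i j)) := by
    intro v
    rw [hFdef, Finset.inf'_univ_eq_ciInf]
  -- continuity
  have hcont : ContinuousOn F Δ := by
    have h1 : ContinuousOn (fun v => Finset.univ.inf' Finset.univ_nonempty
        (fun i : Fin imax => (∑ j, v j * a i j) / (∑ j, v j * b i j))) Δ := by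
      apply ContinuousOn.finset_inf'_apply
      intro i _
      apply ContinuousOn.div
      · exact (continuous_finset_sum _ fun j _ =>
          (continuous_apply j).mul continuous_const).continuousOn
      · exact (continuous_finset_sum _ fun j _ =>
          (continuous_apply j).mul continuous_const).continuousOn
      · intro v hv
        rw [hΔmem] at hv
        exact ne_of_gt (hden v hv.1 hv.2 i)
    exact h1.congr (fun v _ => hFinf' v)
  -- a point of the simplex
  have hΔne : Δ.Nonempty := by
    refine ⟨fun j => if j = ⟨0, hjpos⟩ then 1 else 0, ?_, ?_⟩
    · intro j; dsimp only; split <;> norm_num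
    · simp
  obtain ⟨wstar, hwstarΔ, hmax⟩ := (isCompact_stdSimplex ℝ (Fin jmax)).exists_isMaxOn hΔne hcont
  have hwstar1 : ∀ j, 0 ≤ wstar j := ((hΔmem wstar).1 hwstarΔ).1
  have hwstar2 : ∑ j, wstar j = 1 := ((hΔmem wstar).1 hwstarΔ).2
  set lam : ℝ := F wstar with hlamdef
  set c : Fin imax → Fin jmax → ℝ := fun i j => a i j - lam * b i j with hcdef
  have hbdd : ∀ v : Fin jmax → ℝ, BddBelow (Set.range
      (fun i : Fin imax => (∑ j, v j * a i j) / (∑ j, v j * b i j))) :=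
    fun v => Set.Finite.bddBelow (Set.finite_range _)
  have hkey : ∀ i, 0 ≤ ∑ j, wstar j * c i j := by
    intro i
    have h1 : lam ≤ (∑ j, wstar j * a i j) / (∑ j, wstar j * b i j) := by
      rw [hlamdef, hFdef]
      exact ciInf_le (hbdd wstar) i
    have hD := hden wstar hwstar1 hwstar2 i
    have h2 : lam * (∑ j, wstar j * b i j) ≤ ∑ j, wstar j * a i j :=
      (le_div_iff₀ hD).1 h1
    rw [hcdef]
    rw [sum_expand]
    linarith
  have hwstarne : wstar ≠ 0 := by
    intro h
    rw [h] at hwstar2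
    simp at hwstar2
  obtain ⟨w', hw'1, hw'2, hw'3, hw'4⟩ :=
    shrink h0 c _ wstar le_rfl hwstar1 hkey hwstarne
  set σ : ℝ := ∑ j, w' j with hσdef
  have hσpos : 0 < σ := by
    obtain ⟨j, hj⟩ := Function.ne_iff.1 hw'3
    exact Finset.sum_pos' (fun j _ => hw'1 j)
      ⟨j, Finset.mem_univ j, lt_of_le_of_ne (hw'1 j) (Ne.symm (by simpa using hj))⟩
  set w : Fin jmax → ℝ := fun j => σ⁻¹ * w' j with hwdef
  have hw1 : ∀ j, 0 ≤ w j := fun j => mul_nonneg (inv_nonneg.2 hσpos.le) (hw'1 j)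
  have hw2 : ∑ j, w j = 1 := by
    rw [hwdef, ← Finset.mul_sum, ← hσdef, inv_mul_cancel₀ (ne_of_gt hσpos)]
  have hwsupp : (Finset.univ.filter fun j => w j ≠ 0) =
      (Finset.univ.filter fun j => w' j ≠ 0) := by
    apply Finset.filter_congr
    intro j _
    rw [hwdef]
    simp [mul_ne_zero_iff, inv_ne_zero (ne_of_gt hσpos)]
  have hwL : ∀ i, 0 ≤ ∑ j, w j * c i j := by
    intro i
    have : ∑ j, w j * c i j = σ⁻¹ * ∑ j, w' j * c i j := by
      rw [hwdef, Finset.mul_sum]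
      exact Finset.sum_congr rfl (fun j _ => by ring)
    rw [this]
    exact mul_nonneg (inv_nonneg.2 hσpos.le) (hw'2 i)
  refine ⟨w, hw1, hw2, by rw [hwsupp]; exact hw'4, ?_⟩
  intro v hv1 hv2
  have hvle : F v ≤ lam := hmax ((hΔmem v).2 ⟨hv1, hv2⟩)
  have hlamle : lam ≤ F w := by
    rw [hFdef]
    apply le_ciInf
    intro i
    have hD := hden w hw1 hw2 i
    rw [le_div_iff₀ hD]
    have := hwL i
    rw [hcdef, sum_expand] at this
    linarith
  calc (⨅ i : Fin imax, (∑ j, v j * a i j) / (∑ j, v j * b i j)) = F v := rfl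
    _ ≤ lam := hvle
    _ ≤ F w := hlamle
    _ = _ := rfl
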